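/- Let q be a prime power, m, n ≥ 1, and let C_0, C_1, …, C_{n−1} ∈ M_m(𝔽_q). (i) If C_0 is nonsingular, then for every initial state the sequence generated by the σ-LFSR with coefficients C_0, …, C_{n−1} is periodic (its preperiod is 0). (ii) Conversely, if for every nonzero row vector b ∈ 𝔽_q^m the sequence generated from the initial state (b, 0, …, 0) is periodic, then C_0 is nonsingular. -/

import Mathlib

open Matrix

/-- (i) If `C 0` is nonsingular then every sequence generated by the σ-LFSR with matrix
coefficients `C 0, …, C (n-1)` is periodic (preperiod `0`).  (ii) Conversely, if for
every nonzero row vector `b` the sequence generated from the initial state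
`(b, 0, …, 0)` is periodic, then `C 0` is nonsingular. -/
theorem stmt_12 {F : Type*} [Field F] [Fintype F] (m n : ℕ) (hm : 1 ≤ m) (hn : 1 ≤ n)
    (C : Fin n → Matrix (Fin m) (Fin m) F) :
    (IsUnit (C ⟨0, hn⟩) →
      ∀ s : ℕ → Fin m → F, (∀ i : ℕ, s (i + n) = ∑ j : Fin n, s (i + (j : ℕ)) ᵥ* C j) →
        ∃ r : ℕ, 1 ≤ r ∧ ∀ j : ℕ, s (j + r) = s j) ∧
    ((∀ b : Fin m → F, b ≠ 0 →
      ∀ s : ℕ → Fin m → F, (∀ i : ℕ, s (i + n) = ∑ j : Fin n, s (i + (j : ℕ)) ᵥ* C j) →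
        s 0 = b → (∀ j : ℕ, 1 ≤ j → j < n → s j = 0) →
        ∃ r : ℕ, 1 ≤ r ∧ ∀ j : ℕ, s (j + r) = s j) →
      IsUnit (C ⟨0, hn⟩)) := by
  obtain ⟨n', rfl⟩ : ∃ n', n = n' + 1 := ⟨n - 1, by omega⟩
  have h0 : (⟨0, hn⟩ : Fin (n' + 1)) = 0 := rfl
  constructor
  · intro hC s hs
    set E : ℕ → ℕ → Prop := fun i j => ∀ k, k < n' + 1 → s (i + k) = s (j + k) with hE
    have fwd : ∀ i j, E i j → E (i + 1) (j + 1) := by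
      intro i j h k hk
      rcases Nat.lt_succ_iff_lt_or_eq.mp hk with hk' | rfl
      · have e1 : i + 1 + k = i + (k + 1) := by omega
        have e2 : j + 1 + k = j + (k + 1) := by omega
        rw [e1, e2]
        exact h (k + 1) (by omega)
      · have e1 : i + 1 + k = i + (k + 1) := by omega
        have e2 : j + 1 + k = j + (k + 1) := by omega
        rw [e1, e2, hs i, hs j]
        exact Finset.sum_congr rfl fun t _ => by rw [h t t.isLt]
    have bwd : ∀ i j, E (i + 1) (j + 1) → E i j := by
      intro i j h k hk
      rcases Nat.eq_zero_or_pos k with rfl | hk'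
      · have key : ∀ a : ℕ, s (a + (n' + 1)) =
            s (a + 0) ᵥ* C 0 + ∑ t : Fin n', s (a + ((t : ℕ) + 1)) ᵥ* C t.succ := by
          intro a
          rw [hs a, Fin.sum_univ_succ]
          rfl
        have hsum : (∑ t : Fin n', s (i + ((t : ℕ) + 1)) ᵥ* C t.succ) =
            ∑ t : Fin n', s (j + ((t : ℕ) + 1)) ᵥ* C t.succ := by
          refine Finset.sum_congr rfl fun t _ => ?_
          have e1 : i + ((t : ℕ) + 1) = i + 1 + (t : ℕ) := by omega
          have e2 : j + ((t : ℕ) + 1) = j + 1 + (t : ℕ) := by omega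
          rw [e1, e2, h t (by omega)]
        have htop : s (i + (n' + 1)) = s (j + (n' + 1)) := by
          have e1 : i + (n' + 1) = i + 1 + n' := by omega
          have e2 : j + (n' + 1) = j + 1 + n' := by omega
          rw [e1, e2]; exact h n' (by omega)
        have hkey := key i
        rw [htop, key j, hsum] at hkey
        have hmul : s (i + 0) ᵥ* C 0 = s (j + 0) ᵥ* C 0 :=
          (add_right_cancel hkey).symm
        exact Matrix.vecMul_injective_iff_isUnit.mpr (h0 ▸ hC) hmul
      · obtain ⟨k', rfl⟩ := Nat.exists_eq_add_of_lt hk'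
        have e1 : i + (0 + k' + 1) = i + 1 + k' := by omega
        have e2 : j + (0 + k' + 1) = j + 1 + k' := by omega
        rw [e1, e2]
        exact h k' (by omega)
    have bwdIter : ∀ d a, E a (a + d) → E 0 d := by
      intro d a
      induction a with
      | zero => intro h k hk; simpa using h k hk
      | succ a ih =>
        intro h
        refine ih (bwd a (a + d) ?_)
        intro k hk
        have e : a + d + 1 + k = a + 1 + (d + k) := by omega
        have e2 : a + 1 + k = a + 1 + k := rfl
        have := h k hk
        rw [show a + 1 + d + k = a + d + 1 + k from by omega] at this
        exact this
    have fwdIter : ∀ d j, E j (j + d) → E (j + 1) (j + 1 + d) := by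
      intro d j h
      have := fwd j (j + d) h
      intro k hk
      have := this k hk
      rwa [show j + d + 1 + k = j + 1 + d + k from by omega] at this
    obtain ⟨a, b, hab, heq⟩ := Finite.exists_ne_map_eq_of_infinite
      (fun i : ℕ => (fun k : Fin (n' + 1) => s (i + (k : ℕ))))
    wlog hlt : a < b generalizing a b
    · exact this b a hab.symm heq.symm (by omega)
    obtain ⟨r, rfl⟩ := Nat.exists_eq_add_of_lt hlt
    have hEa : E a (a + (r + 1)) := by
      intro k hk
      have := congrFun heq ⟨k, hk⟩
      simpa [show a + r + 1 = a + (r + 1) from by omega] using this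
    have hE0 : E 0 (r + 1) := bwdIter (r + 1) a hEa
    have hall : ∀ j, E j (j + (r + 1)) := by
      intro j
      induction j with
      | zero => simpa using hE0
      | succ j ih => exact fwdIter (r + 1) j ih
    exact ⟨r + 1, by omega, fun j => by
      have := (hall j 0 (by omega)).symm
      simpa using this⟩
  · intro H
    by_contra hC
    rw [← Matrix.vecMul_injective_iff_isUnit] at hC
    obtain ⟨x, y, hxy, hne⟩ := Function.not_injective_iff.mp hC
    set b : Fin m → F := x - y with hb
    have hbne : b ≠ 0 := sub_ne_zero_of_ne hne
    have hbmul : b ᵥ* C ⟨0, hn⟩ = 0 := by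
      rw [hb, Matrix.sub_vecMul, hxy, sub_self]
    set s : ℕ → Fin m → F := fun i => if i = 0 then b else 0 with hsdef
    have hrec : ∀ i : ℕ, s (i + (n' + 1)) = ∑ j : Fin (n' + 1), s (i + (j : ℕ)) ᵥ* C j := by
      intro i
      have hL : s (i + (n' + 1)) = 0 := by simp [hsdef]
      rw [hL]
      symm
      refine Finset.sum_eq_zero fun t _ => ?_
      by_cases h : i + (t : ℕ) = 0
      · have hi : i = 0 := by omega
        have ht : (t : ℕ) = 0 := by omega
        have ht' : t = ⟨0, hn⟩ := Fin.ext ht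
        rw [h, ht']
        simpa [hsdef] using hbmul
      · have : s (i + (t : ℕ)) = 0 := by simp only [hsdef]; rw [if_neg h]
        rw [this, Matrix.zero_vecMul]
    obtain ⟨r, hr1, hr⟩ := H b hbne s hrec (by simp [hsdef])
      (fun j hj1 _ => by simp only [hsdef]; rw [if_neg (by omega)])
    have h1 : s (0 + r) = s 0 := hr 0
    have h2 : s r = 0 := by simp only [hsdef]; rw [if_neg (by omega)]
    rw [zero_add, h2] at h1
    exact hbne (by simp [hsdef] at h1; exact h1.symm)
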